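/- Let k be a commutative ring which is a ℚ-algebra, A an associative unital k-algebra, and λ ∈ k. The shift operator ∂ : A^ℕ → A^ℕ defined by ∂(a)_n = a_{n+1} is a λ-weighted derivation on the k-algebra (A^ℕ, ·^λ): ∂ is k-linear, ∂(J) = 0 for the unit J = (1,0,0,…), and ∂(a ·^λ b) = (∂a) ·^λ b + a ·^λ (∂b) + λ·((∂a) ·^λ (∂b)) for all a, b ∈ A^ℕ. -/

import Mathlib

/-- The `lam`-weighted Hurwitz product on sequences:
`(a ·^lam b)_n = ∑_{r+s+t=n} (n!/(r!·s!·t!)) · lam^t · a_{r+t} · b_{s+t}`,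
the sum ranging over triples `(r,s,t)` with `r+s+t = n`, enumerated as
`r = x.1`, `s = y.1`, `t = y.2`. -/
noncomputable def hur {k A : Type*} [CommRing k] [Ring A] [Algebra k A]
    (lam : k) (a b : ℕ → A) : ℕ → A := fun n =>
  ∑ x ∈ Finset.HasAntidiagonal.antidiagonal n, ∑ y ∈ Finset.HasAntidiagonal.antidiagonal x.2,
    (n.factorial / (x.1.factorial * y.1.factorial * y.2.factorial)) •
      (lam ^ y.2 • (a (x.1 + y.2) * b (y.1 + y.2)))

/-- The sequence `J = (1,0,0,…)`, the unit for the weighted Hurwitz products. -/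
def Jseq (A : Type*) [One A] [Zero A] : ℕ → A := fun n => if n = 0 then 1 else 0

/-- The shift operator `∂(a)_n = a_{n+1}` on sequences. -/
def shiftSeq {A : Type*} (a : ℕ → A) : ℕ → A := fun n => a (n + 1)

private lemma dvd3 (r s t : ℕ) : r.factorial * s.factorial * t.factorial ∣ (r + s + t).factorial :=
  (mul_dvd_mul (Nat.factorial_mul_factorial_dvd_factorial_add r s) dvd_rfl).trans
    (Nat.factorial_mul_factorial_dvd_factorial_add (r + s) t)

private lemma key (n r s t : ℕ) (h : r + s + t = n + 1) :
    (n+1).factorial / (r.factorial * s.factorial * t.factorial) =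
    (if r = 0 then 0 else n.factorial / ((r-1).factorial * s.factorial * t.factorial)) +
    (if s = 0 then 0 else n.factorial / (r.factorial * (s-1).factorial * t.factorial)) +
    (if t = 0 then 0 else n.factorial / (r.factorial * s.factorial * (t-1).factorial)) := by
  have hD : 0 < r.factorial * s.factorial * t.factorial := by positivity
  apply Nat.eq_of_mul_eq_mul_right hD
  have hmain : (r.factorial * s.factorial * t.factorial) ∣ (n+1).factorial := h ▸ dvd3 r s t
  rw [Nat.div_mul_cancel hmain, add_mul, add_mul]
  have hA : (if r = 0 then 0 else n.factorial / ((r-1).factorial * s.factorial * t.factorial)) *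
      (r.factorial * s.factorial * t.factorial) = r * n.factorial := by
    rcases r with _ | r
    · simp
    · have hd : r.factorial * s.factorial * t.factorial ∣ n.factorial := by
        have he : r + s + t = n := by omega
        exact he ▸ dvd3 r s t
      simp only [Nat.succ_ne_zero, if_false, Nat.add_sub_cancel, Nat.factorial_succ]
      calc n.factorial / (r.factorial * s.factorial * t.factorial) *
            ((r+1) * r.factorial * s.factorial * t.factorial)
          = (r+1) * (n.factorial / (r.factorial * s.factorial * t.factorial) *
            (r.factorial * s.factorial * t.factorial)) := by ring
        _ = (r+1) * n.factorial := by rw [Nat.div_mul_cancel hd]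
  have hB : (if s = 0 then 0 else n.factorial / (r.factorial * (s-1).factorial * t.factorial)) *
      (r.factorial * s.factorial * t.factorial) = s * n.factorial := by
    rcases s with _ | s
    · simp
    · have hd : r.factorial * s.factorial * t.factorial ∣ n.factorial := by
        have he : r + s + t = n := by omega
        exact he ▸ dvd3 r s t
      simp only [Nat.succ_ne_zero, if_false, Nat.add_sub_cancel, Nat.factorial_succ]
      calc n.factorial / (r.factorial * s.factorial * t.factorial) *
            (r.factorial * ((s+1) * s.factorial) * t.factorial)
          = (s+1) * (n.factorial / (r.factorial * s.factorial * t.factorial) *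
            (r.factorial * s.factorial * t.factorial)) := by ring
        _ = (s+1) * n.factorial := by rw [Nat.div_mul_cancel hd]
  have hC : (if t = 0 then 0 else n.factorial / (r.factorial * s.factorial * (t-1).factorial)) *
      (r.factorial * s.factorial * t.factorial) = t * n.factorial := by
    rcases t with _ | t
    · simp
    · have hd : r.factorial * s.factorial * t.factorial ∣ n.factorial := by
        have he : r + s + t = n := by omega
        exact he ▸ dvd3 r s t
      simp only [Nat.succ_ne_zero, if_false, Nat.add_sub_cancel, Nat.factorial_succ]
      calc n.factorial / (r.factorial * s.factorial * t.factorial) *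
            (r.factorial * s.factorial * ((t+1) * t.factorial))
          = (t+1) * (n.factorial / (r.factorial * s.factorial * t.factorial) *
            (r.factorial * s.factorial * t.factorial)) := by ring
        _ = (t+1) * n.factorial := by rw [Nat.div_mul_cancel hd]
  rw [hA, hB, hC, ← add_mul, ← add_mul, h, Nat.factorial_succ]

open Finset in
private lemma hurA {k A : Type*} [CommRing k] [Ring A] [Algebra k A]
    (lam : k) (a b : ℕ → A) (n : ℕ) :
    (∑ x ∈ antidiagonal (n+1), ∑ y ∈ antidiagonal x.2,
        (if x.1 = 0 then (0:A) else
          (n.factorial / ((x.1-1).factorial * y.1.factorial * y.2.factorial)) •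
          (lam ^ y.2 • (a (x.1 + y.2) * b (y.1 + y.2)))))
      = hur lam (shiftSeq a) b n := by
  rw [Finset.Nat.antidiagonal_succ]
  simp only [hur, shiftSeq, Finset.sum_cons, Finset.sum_map,
    Function.Embedding.coe_prodMap, Function.Embedding.coeFn_mk, Function.Embedding.refl_apply,
    Prod.map_fst, Prod.map_snd, id_eq, if_true, if_pos rfl, Nat.succ_ne_zero, if_false,
    Nat.succ_sub_one, Finset.sum_const_zero, zero_add, Nat.succ_add, Nat.succ_eq_add_one]

open Finset in
private lemma hurB {k A : Type*} [CommRing k] [Ring A] [Algebra k A]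
    (lam : k) (a b : ℕ → A) (n : ℕ) :
    (∑ x ∈ antidiagonal (n+1), ∑ y ∈ antidiagonal x.2,
        (if y.1 = 0 then (0:A) else
          (n.factorial / (x.1.factorial * (y.1-1).factorial * y.2.factorial)) •
          (lam ^ y.2 • (a (x.1 + y.2) * b (y.1 + y.2)))))
      = hur lam a (shiftSeq b) n := by
  rw [Finset.Nat.antidiagonal_succ']
  simp only [hur, shiftSeq, Finset.sum_cons, Finset.sum_map, Finset.Nat.antidiagonal_succ,
    Finset.Nat.antidiagonal_zero, Finset.sum_singleton,
    Function.Embedding.coe_prodMap, Function.Embedding.coeFn_mk, Function.Embedding.refl_apply,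
    Prod.map_fst, Prod.map_snd, id_eq, if_true, if_pos rfl, Nat.succ_ne_zero, if_false,
    Nat.succ_sub_one, Finset.sum_const_zero, zero_add, Nat.succ_add, Nat.succ_eq_add_one]

open Finset in
private lemma hurC {k A : Type*} [CommRing k] [Ring A] [Algebra k A]
    (lam : k) (a b : ℕ → A) (n : ℕ) :
    (∑ x ∈ antidiagonal (n+1), ∑ y ∈ antidiagonal x.2,
        (if y.2 = 0 then (0:A) else
          (n.factorial / (x.1.factorial * y.1.factorial * (y.2-1).factorial)) •
          (lam ^ y.2 • (a (x.1 + y.2) * b (y.1 + y.2)))))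
      = lam • hur lam (shiftSeq a) (shiftSeq b) n := by
  rw [Finset.Nat.antidiagonal_succ']
  simp only [hur, shiftSeq, Finset.sum_cons, Finset.sum_map, Finset.Nat.antidiagonal_succ',
    Finset.Nat.antidiagonal_zero, Finset.sum_singleton, Finset.smul_sum,
    Function.Embedding.coe_prodMap, Function.Embedding.coeFn_mk, Function.Embedding.refl_apply,
    Prod.map_fst, Prod.map_snd, id_eq, if_true, if_pos rfl, Nat.succ_ne_zero, if_false,
    Nat.succ_sub_one, Finset.sum_const_zero, zero_add, Nat.succ_add, Nat.succ_eq_add_one,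
    ← add_assoc]
  refine Finset.sum_congr rfl fun x hx => Finset.sum_congr rfl fun y hy => ?_
  rw [smul_comm lam, smul_smul, ← pow_succ']

/-- The shift operator `∂(a)_n = a_{n+1}` is a `λ`-weighted derivation
on the `k`-algebra `(A^ℕ, ·^λ)`: it is `k`-linear, `∂(J) = 0`, and
`∂(a ·^λ b) = (∂a) ·^λ b + a ·^λ (∂b) + λ·((∂a) ·^λ (∂b))`. -/
theorem stmt13 {k A : Type*} [CommRing k] [Algebra ℚ k] [Ring A] [Algebra k A] (lam : k) :
    (∀ a b : ℕ → A, shiftSeq (a + b) = shiftSeq a + shiftSeq b) ∧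
    (∀ (c : k) (a : ℕ → A), shiftSeq (c • a) = c • shiftSeq a) ∧
    (shiftSeq (Jseq A) = 0) ∧
    (∀ a b : ℕ → A,
      shiftSeq (hur lam a b) =
        hur lam (shiftSeq a) b + hur lam a (shiftSeq b) +
          lam • hur lam (shiftSeq a) (shiftSeq b)) := by
  refine ⟨fun a b => rfl, fun c a => rfl, ?_, ?_⟩
  · funext m
    simp [shiftSeq, Jseq]
  · intro a b
    funext n
    have split : hur lam a b (n + 1) =
        (∑ x ∈ Finset.HasAntidiagonal.antidiagonal (n+1), ∑ y ∈ Finset.HasAntidiagonal.antidiagonal x.2,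
          (if x.1 = 0 then (0:A) else
            (n.factorial / ((x.1-1).factorial * y.1.factorial * y.2.factorial)) •
            (lam ^ y.2 • (a (x.1 + y.2) * b (y.1 + y.2)))))
      + (∑ x ∈ Finset.HasAntidiagonal.antidiagonal (n+1), ∑ y ∈ Finset.HasAntidiagonal.antidiagonal x.2,
          (if y.1 = 0 then (0:A) else
            (n.factorial / (x.1.factorial * (y.1-1).factorial * y.2.factorial)) •
            (lam ^ y.2 • (a (x.1 + y.2) * b (y.1 + y.2)))))
      + (∑ x ∈ Finset.HasAntidiagonal.antidiagonal (n+1), ∑ y ∈ Finset.HasAntidiagonal.antidiagonal x.2,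
          (if y.2 = 0 then (0:A) else
            (n.factorial / (x.1.factorial * y.1.factorial * (y.2-1).factorial)) •
            (lam ^ y.2 • (a (x.1 + y.2) * b (y.1 + y.2))))) := by
      rw [hur, ← Finset.sum_add_distrib, ← Finset.sum_add_distrib]
      refine Finset.sum_congr rfl fun x hx => ?_
      rw [← Finset.sum_add_distrib, ← Finset.sum_add_distrib]
      refine Finset.sum_congr rfl fun y hy => ?_
      rw [Finset.HasAntidiagonal.mem_antidiagonal] at hx hy
      rw [key n x.1 y.1 y.2 (by omega), add_smul, add_smul, ite_smul, ite_smul, ite_smul,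
        zero_smul]
    show hur lam a b (n + 1) = _
    rw [split, hurA, hurB, hurC]
    rfl
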